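/- For any simple graph G on a finite vertex set with n ≥ 6 vertices, 0 ≤ ai(G) ≤ n(n−1)/2 − (n−2). -/

import Mathlib

/-- A simple graph is *asymmetric* if its only automorphism is the identity. -/
def SimpleGraph.IsAsymmetric {V : Type*} (G : SimpleGraph V) : Prop :=
  ∀ f : G ≃g G, ∀ v : V, f v = v

/-- The *asymmetric index* `ai(G)`: the minimum, over all asymmetric graphs `G'` on the
same vertex set, of the number of edges in which `G` and `G'` differ (edges removed plus
edges added); `⊤` (infinity) if no asymmetric graph on the vertex set exists. -/
noncomputable def SimpleGraph.asymIndex {V : Type*} (G : SimpleGraph V) : ℕ∞ :=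
  sInf {n : ℕ∞ | ∃ G' : SimpleGraph V, G'.IsAsymmetric ∧
    n = (symmDiff G.edgeSet G'.edgeSet).encard}


def Qrel (a b : ℕ) : Prop :=
  (a=0∧b=1)∨(a=0∧b=2)∨(a=1∧b=2)∨(a=1∧b=3)∨(a=2∧b=4)∨(4 ≤ a ∧ b = a+1)

def Rrel (a b : ℕ) : Prop := Qrel a b ∨ Qrel b a

def agraph (n : ℕ) : SimpleGraph (Fin n) where
  Adj i j := Rrel i.val j.val
  symm := ⟨fun _ _ h => Or.symm h⟩
  loopless := ⟨fun i h => by unfold Rrel Qrel at h; omega⟩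

lemma agraph_adj_mk {n i j : ℕ} (hi : i < n) (hj : j < n) (h : Rrel i j) :
    (agraph n).Adj ⟨i, hi⟩ ⟨j, hj⟩ := h

lemma Rrel_nbr {a b : ℕ} (h : Rrel a b) :
    (a = 0 ∧ (b=1∨b=2)) ∨ (a=1 ∧ (b=0∨b=2∨b=3)) ∨ (a=2∧(b=0∨b=1∨b=4)) ∨
    (a=3∧b=1) ∨ (a=4∧(b=2∨b=5)) ∨ (5≤a ∧ (b+1=a ∨ b=a+1)) := by
  unfold Rrel Qrel at h; omega

lemma Rrel_nbr_mk {n k : ℕ} {hk : k < n} {x : Fin n} (h : (agraph n).Adj ⟨k, hk⟩ x) :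
    (k = 0 ∧ (x.val=1∨x.val=2)) ∨ (k=1 ∧ (x.val=0∨x.val=2∨x.val=3)) ∨
    (k=2∧(x.val=0∨x.val=1∨x.val=4)) ∨ (k=3∧x.val=1) ∨ (k=4∧(x.val=2∨x.val=5)) ∨
    (5≤k ∧ (x.val+1=k ∨ x.val=k+1)) :=
  Rrel_nbr h

lemma deg3 {n : ℕ} {v x y z : Fin n} (hx : (agraph n).Adj v x) (hy : (agraph n).Adj v y)
    (hz : (agraph n).Adj v z) (hxy : x.val ≠ y.val) (hxz : x.val ≠ z.val)
    (hyz : y.val ≠ z.val) : v.val = 1 ∨ v.val = 2 := by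
  have h1 := Rrel_nbr hx
  have h2 := Rrel_nbr hy
  have h3 := Rrel_nbr hz
  omega

/-- a vertex all of whose neighbors coincide (degree ≤ 1) -/
def Lf {n : ℕ} (v : Fin n) : Prop :=
  ∀ x y : Fin n, (agraph n).Adj v x → (agraph n).Adj v y → x = y

lemma lf3 {n : ℕ} (v : Fin n) (hv : v.val = 3) : Lf v := by
  intro x y hx hy
  have h1 := Rrel_nbr hx
  have h2 := Rrel_nbr hy
  exact Fin.ext (by omega)

lemma not_lf {n : ℕ} (hn : 6 ≤ n) (v : Fin n) (hv : v.val = 0 ∨ v.val = 1 ∨ v.val = 4) :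
    ¬ Lf v := by
  intro hL
  have hvn := v.isLt
  rcases hv with hv | hv | hv
  · have h := hL ⟨1, by omega⟩ ⟨2, by omega⟩
      (by show Rrel v.val 1; unfold Rrel Qrel; omega)
      (by show Rrel v.val 2; unfold Rrel Qrel; omega)
    have h' : (1:ℕ) = 2 := congrArg Fin.val h
    omega
  · have h := hL ⟨0, by omega⟩ ⟨2, by omega⟩
      (by show Rrel v.val 0; unfold Rrel Qrel; omega)
      (by show Rrel v.val 2; unfold Rrel Qrel; omega)
    have h' : (0:ℕ) = 2 := congrArg Fin.val h
    omega
  · have h := hL ⟨2, by omega⟩ ⟨5, by omega⟩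
      (by show Rrel v.val 2; unfold Rrel Qrel; omega)
      (by show Rrel v.val 5; unfold Rrel Qrel; omega)
    have h' : (2:ℕ) = 5 := congrArg Fin.val h
    omega

variable {n : ℕ}

lemma afinj (f : agraph n ≃g agraph n) : Function.Injective f := f.toEquiv.injective

lemma avne (f : agraph n ≃g agraph n) {a b : Fin n} (hab : a ≠ b) : (f a).val ≠ (f b).val :=
  fun h => hab (afinj f (Fin.ext h))

lemma amkne {i j : ℕ} (hi : i < n) (hj : j < n) (hij : i ≠ j) :
    (⟨i, hi⟩ : Fin n) ≠ ⟨j, hj⟩ :=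
  fun h => hij (congrArg Fin.val h)

lemma aleaf_pres (f : agraph n ≃g agraph n) (v : Fin n) (hv : Lf v) : Lf (f v) := by
  intro x y hx hy
  have hx' : (agraph n).Adj v (f.symm x) := by
    have h : (agraph n).Adj (f v) (f (f.symm x)) ↔ (agraph n).Adj v (f.symm x) :=
      f.map_adj_iff
    rw [RelIso.apply_symm_apply] at h
    exact h.mp hx
  have hy' : (agraph n).Adj v (f.symm y) := by
    have h : (agraph n).Adj (f v) (f (f.symm y)) ↔ (agraph n).Adj v (f.symm y) :=
      f.map_adj_iff
    rw [RelIso.apply_symm_apply] at h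
    exact h.mp hy
  have h := congrArg f (hv _ _ hx' hy')
  rwa [RelIso.apply_symm_apply, RelIso.apply_symm_apply] at h

lemma afix1 (hn : 6 ≤ n) (f : agraph n ≃g agraph n) (h1n : 1 < n) : f ⟨1, h1n⟩ = ⟨1, h1n⟩ := by
  have h0n : (0:ℕ) < n := by omega
  have h2n : (2:ℕ) < n := by omega
  have h3n : (3:ℕ) < n := by omega
  have adj10 : (agraph n).Adj ⟨1,h1n⟩ ⟨0,h0n⟩ := agraph_adj_mk _ _ (by unfold Rrel Qrel; decide)
  have adj12 : (agraph n).Adj ⟨1,h1n⟩ ⟨2,h2n⟩ := agraph_adj_mk _ _ (by unfold Rrel Qrel; decide)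
  have adj13 : (agraph n).Adj ⟨1,h1n⟩ ⟨3,h3n⟩ := agraph_adj_mk _ _ (by unfold Rrel Qrel; decide)
  have hd : (f ⟨1,h1n⟩).val = 1 ∨ (f ⟨1,h1n⟩).val = 2 :=
    deg3 (f.map_adj_iff.mpr adj10) (f.map_adj_iff.mpr adj12) (f.map_adj_iff.mpr adj13)
      (avne f (amkne h0n h2n (by omega))) (avne f (amkne h0n h3n (by omega)))
      (avne f (amkne h2n h3n (by omega)))
  rcases hd with hd | hd
  · exact Fin.ext hd
  · exfalso
    have hadj : (agraph n).Adj (f ⟨1,h1n⟩) (f ⟨3,h3n⟩) := f.map_adj_iff.mpr adj13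
    have hL : Lf (f ⟨3,h3n⟩) := aleaf_pres f _ (lf3 _ rfl)
    have hnb := Rrel_nbr hadj
    refine not_lf hn _ ?_ hL
    omega

lemma afix2 (hn : 6 ≤ n) (f : agraph n ≃g agraph n) (h2n : 2 < n) : f ⟨2, h2n⟩ = ⟨2, h2n⟩ := by
  have h0n : (0:ℕ) < n := by omega
  have h1n : (1:ℕ) < n := by omega
  have h4n : (4:ℕ) < n := by omega
  have adj20 : (agraph n).Adj ⟨2,h2n⟩ ⟨0,h0n⟩ := agraph_adj_mk _ _ (by unfold Rrel Qrel; decide)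
  have adj21 : (agraph n).Adj ⟨2,h2n⟩ ⟨1,h1n⟩ := agraph_adj_mk _ _ (by unfold Rrel Qrel; decide)
  have adj24 : (agraph n).Adj ⟨2,h2n⟩ ⟨4,h4n⟩ := agraph_adj_mk _ _ (by unfold Rrel Qrel; decide)
  have hd : (f ⟨2,h2n⟩).val = 1 ∨ (f ⟨2,h2n⟩).val = 2 :=
    deg3 (f.map_adj_iff.mpr adj20) (f.map_adj_iff.mpr adj21) (f.map_adj_iff.mpr adj24)
      (avne f (amkne h0n h1n (by omega))) (avne f (amkne h0n h4n (by omega)))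
      (avne f (amkne h1n h4n (by omega)))
  have hne : (f ⟨2,h2n⟩).val ≠ 1 := by
    have h := avne f (amkne h2n h1n (by omega) : (⟨2,h2n⟩ : Fin n) ≠ ⟨1,h1n⟩)
    rw [afix1 hn f h1n] at h
    exact h
  exact Fin.ext (show (f ⟨2,h2n⟩).val = 2 by omega)

lemma afix3 (hn : 6 ≤ n) (f : agraph n ≃g agraph n) (h3n : 3 < n) : f ⟨3, h3n⟩ = ⟨3, h3n⟩ := by
  have h1n : (1:ℕ) < n := by omega
  have h2n : (2:ℕ) < n := by omega
  have adj13 : (agraph n).Adj ⟨1,h1n⟩ ⟨3,h3n⟩ := agraph_adj_mk _ _ (by unfold Rrel Qrel; decide)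
  have hadj : (agraph n).Adj ⟨1,h1n⟩ (f ⟨3,h3n⟩) := by
    have h := f.map_adj_iff.mpr adj13
    rwa [afix1 hn f h1n] at h
  have hnb := Rrel_nbr_mk hadj
  have hL : Lf (f ⟨3,h3n⟩) := aleaf_pres f _ (lf3 _ rfl)
  have hval : (f ⟨3,h3n⟩).val = 0 ∨ (f ⟨3,h3n⟩).val = 2 ∨ (f ⟨3,h3n⟩).val = 3 := by omega
  rcases hval with hv | hv | hv
  · exact absurd hL (not_lf hn _ (by omega))
  · exfalso
    have h : f ⟨3,h3n⟩ = f ⟨2,h2n⟩ := by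
      rw [afix2 hn f h2n]; exact Fin.ext (show (f ⟨3,h3n⟩).val = 2 by omega)
    exact amkne h3n h2n (by omega) (afinj f h)
  · exact Fin.ext hv

lemma afix0 (hn : 6 ≤ n) (f : agraph n ≃g agraph n) (h0n : 0 < n) : f ⟨0, h0n⟩ = ⟨0, h0n⟩ := by
  have h1n : (1:ℕ) < n := by omega
  have h2n : (2:ℕ) < n := by omega
  have adj10 : (agraph n).Adj ⟨1,h1n⟩ ⟨0,h0n⟩ := agraph_adj_mk _ _ (by unfold Rrel Qrel; decide)
  have adj20 : (agraph n).Adj ⟨2,h2n⟩ ⟨0,h0n⟩ := agraph_adj_mk _ _ (by unfold Rrel Qrel; decide)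
  have ha1 : (agraph n).Adj ⟨1,h1n⟩ (f ⟨0,h0n⟩) := by
    have h := f.map_adj_iff.mpr adj10
    rwa [afix1 hn f h1n] at h
  have ha2 : (agraph n).Adj ⟨2,h2n⟩ (f ⟨0,h0n⟩) := by
    have h := f.map_adj_iff.mpr adj20
    rwa [afix2 hn f h2n] at h
  have hnb1 := Rrel_nbr_mk ha1
  have hnb2 := Rrel_nbr_mk ha2
  exact Fin.ext (show (f ⟨0,h0n⟩).val = 0 by omega)

lemma afix4 (hn : 6 ≤ n) (f : agraph n ≃g agraph n) (h4n : 4 < n) : f ⟨4, h4n⟩ = ⟨4, h4n⟩ := by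
  have h0n : (0:ℕ) < n := by omega
  have h1n : (1:ℕ) < n := by omega
  have h2n : (2:ℕ) < n := by omega
  have adj24 : (agraph n).Adj ⟨2,h2n⟩ ⟨4,h4n⟩ := agraph_adj_mk _ _ (by unfold Rrel Qrel; decide)
  have ha : (agraph n).Adj ⟨2,h2n⟩ (f ⟨4,h4n⟩) := by
    have h := f.map_adj_iff.mpr adj24
    rwa [afix2 hn f h2n] at h
  have hnb := Rrel_nbr_mk ha
  have hne0 : (f ⟨4,h4n⟩).val ≠ 0 := by
    have h := avne f (amkne h4n h0n (by omega) : (⟨4,h4n⟩ : Fin n) ≠ ⟨0,h0n⟩)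
    rw [afix0 hn f h0n] at h
    exact h
  have hne1 : (f ⟨4,h4n⟩).val ≠ 1 := by
    have h := avne f (amkne h4n h1n (by omega) : (⟨4,h4n⟩ : Fin n) ≠ ⟨1,h1n⟩)
    rw [afix1 hn f h1n] at h
    exact h
  exact Fin.ext (show (f ⟨4,h4n⟩).val = 4 by omega)

lemma afix5 (hn : 6 ≤ n) (f : agraph n ≃g agraph n) (h5n : 5 < n) : f ⟨5, h5n⟩ = ⟨5, h5n⟩ := by
  have h2n : (2:ℕ) < n := by omega
  have h4n : (4:ℕ) < n := by omega
  have adj45 : (agraph n).Adj ⟨4,h4n⟩ ⟨5,h5n⟩ := agraph_adj_mk _ _ (by unfold Rrel Qrel; decide)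
  have ha : (agraph n).Adj ⟨4,h4n⟩ (f ⟨5,h5n⟩) := by
    have h := f.map_adj_iff.mpr adj45
    rwa [afix4 hn f h4n] at h
  have hnb := Rrel_nbr_mk ha
  have hne2 : (f ⟨5,h5n⟩).val ≠ 2 := by
    have h := avne f (amkne h5n h2n (by omega) : (⟨5,h5n⟩ : Fin n) ≠ ⟨2,h2n⟩)
    rw [afix2 hn f h2n] at h
    exact h
  exact Fin.ext (show (f ⟨5,h5n⟩).val = 5 by omega)

/-- isolated inductive step -/
lemma astep {n m : ℕ} {x : Fin n} (hm : 6 ≤ m) (h : m < n) (hp : m - 1 < n)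
    (ha : (agraph n).Adj ⟨m-1, hp⟩ x) (hne : x.val ≠ m - 2) : x = ⟨m, h⟩ := by
  have hnb := Rrel_nbr_mk ha
  exact Fin.ext (show x.val = m by omega)


lemma agraph_adj_succ {n i j : ℕ} (hi : i < n) (hj : j < n) (h4 : 4 ≤ i) (hj1 : j = i + 1) :
    (agraph n).Adj ⟨i, hi⟩ ⟨j, hj⟩ :=
  Or.inl (Or.inr (Or.inr (Or.inr (Or.inr (Or.inr ⟨h4, hj1⟩)))))

set_option maxHeartbeats 800000 in
lemma agraph_asym {n : ℕ} (hn : 6 ≤ n) (f : agraph n ≃g agraph n) (v : Fin n) : f v = v := by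
  have main : ∀ m, ∀ h : m < n, f ⟨m, h⟩ = ⟨m, h⟩ := by
    intro m
    induction m using Nat.strong_induction_on with
    | _ m ih =>
      intro h
      by_cases hm : m ≤ 5
      · have h6 : m = 0 ∨ m = 1 ∨ m = 2 ∨ m = 3 ∨ m = 4 ∨ m = 5 := by omega
        rcases h6 with rfl | rfl | rfl | rfl | rfl | rfl
        · exact afix0 hn f h
        · exact afix1 hn f h
        · exact afix2 hn f h
        · exact afix3 hn f h
        · exact afix4 hn f h
        · exact afix5 hn f h
      · have hm6 : 6 ≤ m := by omega
        have hprev : m - 1 < n := by omega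
        have hprev2 : m - 2 < n := by omega
        have adjp : (agraph n).Adj ⟨m-1, hprev⟩ ⟨m, h⟩ :=
          agraph_adj_succ hprev h (by omega) (by omega)
        have ha : (agraph n).Adj ⟨m-1, hprev⟩ (f ⟨m, h⟩) := by
          have hh := f.map_adj_iff.mpr adjp
          rwa [ih (m-1) (by omega) hprev] at hh
        have hne : (f ⟨m, h⟩).val ≠ m - 2 := by
          have hh := avne f (amkne h hprev2 (by omega) : (⟨m,h⟩ : Fin n) ≠ ⟨m-2, hprev2⟩)
          rwa [ih (m-2) (by omega) hprev2] at hh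
        exact astep hm6 h hprev ha hne
  have h := main v.val v.isLt
  simpa using h

lemma iso_asym {V W : Type*} {G : SimpleGraph V} {H : SimpleGraph W} (e : G ≃g H)
    (h : H.IsAsymmetric) : G.IsAsymmetric := by
  intro f v
  have h2 : e (f (e.symm (e v))) = e v := h (e.symm.trans (f.trans e)) (e v)
  rw [RelIso.symm_apply_apply] at h2
  exact e.toEquiv.injective h2

lemma compl_asym {V : Type*} {G : SimpleGraph V} (h : G.IsAsymmetric) :
    (Gᶜ).IsAsymmetric := by
  intro f v
  have key : ∀ a b : V, G.Adj (f.toEquiv a) (f.toEquiv b) ↔ G.Adj a b := by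
    intro a b
    by_cases hab : a = b
    · subst hab
      simp
    · have h1 : (Gᶜ).Adj (f a) (f b) ↔ (Gᶜ).Adj a b := f.map_adj_iff
      have hne : f a ≠ f b := fun hh => hab (f.toEquiv.injective hh)
      simp only [SimpleGraph.compl_adj] at h1
      constructor
      · intro hadj
        by_contra hcon
        have := h1.mpr ⟨hab, hcon⟩
        exact this.2 hadj
      · intro hadj
        by_contra hcon
        have := h1.mp ⟨hne, hcon⟩
        exact this.2 hadj
  exact h ⟨f.toEquiv, key _ _⟩ v

lemma exists_asym {V : Type*} [Fintype V] (hV : 6 ≤ Fintype.card V) :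
    ∃ A : SimpleGraph V, A.IsAsymmetric :=
  ⟨_, iso_asym (SimpleGraph.Iso.comap (Fintype.equivFin V) (agraph (Fintype.card V)))
    (fun f v => agraph_asym hV f v)⟩

lemma key_count {V : Type*} [Fintype V] (G H : SimpleGraph V) :
    (symmDiff G.edgeSet H.edgeSet).encard + (symmDiff G.edgeSet (Hᶜ).edgeSet).encard
      = (((Fintype.card V).choose 2 : ℕ) : ℕ∞) := by
  classical
  have hdisj : Disjoint (symmDiff G.edgeSet H.edgeSet) (symmDiff G.edgeSet (Hᶜ).edgeSet) := by
    rw [Set.disjoint_left]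
    intro e he1 he2
    induction e using Sym2.ind with
    | _ a b =>
      rw [Set.mem_symmDiff] at he1 he2
      simp only [SimpleGraph.mem_edgeSet, SimpleGraph.compl_adj] at he1 he2
      have hG : G.Adj a b → a ≠ b := G.ne_of_adj
      have hH : H.Adj a b → a ≠ b := H.ne_of_adj
      tauto
  have hunion : symmDiff G.edgeSet H.edgeSet ∪ symmDiff G.edgeSet (Hᶜ).edgeSet
      = (⊤ : SimpleGraph V).edgeSet := by
    ext e
    induction e using Sym2.ind with
    | _ a b =>
      simp only [Set.mem_union, Set.mem_symmDiff, SimpleGraph.mem_edgeSet,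
        SimpleGraph.compl_adj, SimpleGraph.top_adj]
      have hG : G.Adj a b → a ≠ b := G.ne_of_adj
      have hH : H.Adj a b → a ≠ b := H.ne_of_adj
      tauto
  rw [← Set.encard_union_eq hdisj, hunion]
  rw [← SimpleGraph.coe_edgeFinset, Set.encard_coe_eq_coe_finsetCard,
    SimpleGraph.card_edgeFinset_top_eq_card_choose_two]

theorem asymIndex_le_bound' {V : Type*} [Fintype V] (hV : 6 ≤ Fintype.card V)
    (G : SimpleGraph V) :
    0 ≤ G.asymIndex ∧
      G.asymIndex ≤
        ((Fintype.card V * (Fintype.card V - 1) / 2 - (Fintype.card V - 2) : ℕ) : ℕ∞) := by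
  classical
  refine ⟨zero_le, ?_⟩
  obtain ⟨A, hA⟩ := exists_asym hV
  have hAc : (Aᶜ).IsAsymmetric := compl_asym hA
  have le1 : G.asymIndex ≤ (symmDiff G.edgeSet A.edgeSet).encard :=
    sInf_le ⟨A, hA, rfl⟩
  have le2 : G.asymIndex ≤ (symmDiff G.edgeSet (Aᶜ).edgeSet).encard :=
    sInf_le ⟨Aᶜ, hAc, rfl⟩
  have hsum := key_count G A
  have hfin1 : (symmDiff G.edgeSet A.edgeSet).Finite := Set.toFinite _
  have hfin2 : (symmDiff G.edgeSet (Aᶜ).edgeSet).Finite := Set.toFinite _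
  obtain ⟨a, ha⟩ : ∃ a : ℕ, (symmDiff G.edgeSet A.edgeSet).encard = a :=
    ⟨hfin1.toFinset.card, hfin1.encard_eq_coe_toFinset_card⟩
  obtain ⟨b, hb⟩ : ∃ b : ℕ, (symmDiff G.edgeSet (Aᶜ).edgeSet).encard = b :=
    ⟨hfin2.toFinset.card, hfin2.encard_eq_coe_toFinset_card⟩
  rw [ha, hb] at hsum
  have hab : a + b = (Fintype.card V).choose 2 := by exact_mod_cast hsum
  set c := Fintype.card V with hc
  have hchoose : c.choose 2 = c * (c - 1) / 2 := Nat.choose_two_right c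
  have hmul : 6 * (c - 1) ≤ c * (c - 1) := Nat.mul_le_mul_right _ hV
  have heven : c * (c - 1) / 2 * 2 = c * (c - 1) := by
    refine Nat.div_mul_cancel ?_
    have h1 : c - 1 + 1 = c := by omega
    have h2 : Even ((c - 1) * (c - 1 + 1)) := Nat.even_mul_succ_self (c - 1)
    rw [h1] at h2
    have h3 : Even (c * (c - 1)) := by rwa [mul_comm] at h2
    exact h3.two_dvd
  have hkey : a ≤ c * (c - 1) / 2 - (c - 2) ∨ b ≤ c * (c - 1) / 2 - (c - 2) := by
    omega
  rcases hkey with hk | hk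
  · calc G.asymIndex ≤ (a : ℕ∞) := by rw [← ha]; exact le1
      _ ≤ _ := by exact_mod_cast hk
  · calc G.asymIndex ≤ (b : ℕ∞) := by rw [← hb]; exact le2
      _ ≤ _ := by exact_mod_cast hk

/-- For a graph on `n ≥ 6` vertices, `0 ≤ ai(G) ≤ n(n-1)/2 - (n-2)`. -/
theorem asymIndex_le_bound {V : Type*} [Fintype V] (hV : 6 ≤ Fintype.card V)
    (G : SimpleGraph V) :
    0 ≤ G.asymIndex ∧
      G.asymIndex ≤
        ((Fintype.card V * (Fintype.card V - 1) / 2 - (Fintype.card V - 2) : ℕ) : ℕ∞) := by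
  exact asymIndex_le_bound' hV G
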